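/- For every positive integer k and real B, (1+t)⁻¹ · 2k ∫₀¹ r^{2k−1}/((1+t)⁻¹ + (t/(1+t)) e^B r^{2k})² dr → e^{−B} as t → +∞. -/

import Mathlib

open Real Filter

lemma aux_deriv (k : ℕ) (hk : 1 ≤ k) (a b : ℝ) (ha : 0 < a) (hb : 0 < b) (r : ℝ) :
    HasDerivAt (fun r : ℝ => -(1 / (2 * k * b)) * (a + b * r ^ (2 * k))⁻¹)
      (r ^ (2 * k - 1) / (a + b * r ^ (2 * k)) ^ 2) r := by
  have hrp : (0:ℝ) ≤ r ^ (2 * k) := (even_two_mul k).pow_nonneg r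
  have hpos : 0 < a + b * r ^ (2 * k) := by nlinarith
  have h1 : HasDerivAt (fun r : ℝ => a + b * r ^ (2 * k))
      (b * ((2 * k : ℕ) * r ^ (2 * k - 1))) r := by
    simpa using ((hasDerivAt_pow (2 * k) r).const_mul b).const_add a
  have h2 := (h1.inv hpos.ne').const_mul (-(1 / (2 * k * b)))
  refine h2.congr_deriv ?_
  have hk0 : (0:ℝ) < (k:ℝ) := by exact_mod_cast hk
  field_simp
  push_cast
  ring

lemma aux_int (k : ℕ) (hk : 1 ≤ k) (a b : ℝ) (ha : 0 < a) (hb : 0 < b) :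
    (∫ r in (0:ℝ)..1, r ^ (2 * k - 1) / (a + b * r ^ (2 * k)) ^ 2)
      = 1 / (2 * k * (a * (a + b))) := by
  have hint : IntervalIntegrable
      (fun r : ℝ => r ^ (2 * k - 1) / (a + b * r ^ (2 * k)) ^ 2)
      MeasureTheory.volume 0 1 := by
    apply ContinuousOn.intervalIntegrable
    apply ContinuousOn.div (by fun_prop) (by fun_prop)
    intro r _
    have hrp : (0:ℝ) ≤ r ^ (2 * k) := (even_two_mul k).pow_nonneg r
    have hpos : 0 < a + b * r ^ (2 * k) := by nlinarith
    positivity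
  have key := intervalIntegral.integral_eq_sub_of_hasDerivAt
    (f := fun r : ℝ => -(1 / (2 * k * b)) * (a + b * r ^ (2 * k))⁻¹)
    (fun r _ => aux_deriv k hk a b ha hb r) hint
  rw [zero_pow (by omega : 2 * k ≠ 0), one_pow] at key
  rw [key]
  have hk0 : (0:ℝ) < (k:ℝ) := by exact_mod_cast hk
  have hab : 0 < a + b := by linarith
  field_simp
  ring

theorem stmt_12 (k : ℕ) (hk : 1 ≤ k) (B : ℝ) :
    Filter.Tendsto (fun t : ℝ =>
        (1 + t)⁻¹ * (2 * k) *
          ∫ r in (0:ℝ)..1,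
            r ^ (2 * k - 1) /
              ((1 + t)⁻¹ + (t / (1 + t)) * Real.exp B * r ^ (2 * k)) ^ 2)
      Filter.atTop (nhds (Real.exp (-B))) := by
  have hmain : Tendsto (fun t : ℝ => ((1 + t)⁻¹ + (t / (1 + t)) * Real.exp B)⁻¹)
      atTop (nhds (Real.exp (-B))) := by
    have h1 : Tendsto (fun t : ℝ => (1 + t)⁻¹) atTop (nhds 0) :=
      tendsto_inv_atTop_zero.comp (tendsto_atTop_add_const_left _ 1 tendsto_id)
    have h2 : Tendsto (fun t : ℝ => t / (1 + t)) atTop (nhds 1) := by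
      have heq : ∀ᶠ t : ℝ in atTop, t / (1 + t) = 1 - (1 + t)⁻¹ := by
        filter_upwards [eventually_gt_atTop (0:ℝ)] with t ht
        have h : (1 + t) ≠ 0 := by positivity
        field_simp
        ring
      rw [tendsto_congr' heq]
      simpa using (tendsto_const_nhds (x := (1:ℝ))).sub h1
    have : Tendsto (fun t : ℝ => (1 + t)⁻¹ + (t / (1 + t)) * Real.exp B)
        atTop (nhds (Real.exp B)) := by
      simpa using h1.add (h2.mul tendsto_const_nhds)
    simpa [Real.exp_neg] using this.inv₀ (Real.exp_ne_zero B)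
  apply hmain.congr'
  filter_upwards [eventually_gt_atTop (0:ℝ)] with t ht
  have h1t : (0:ℝ) < 1 + t := by linarith
  have ha : (0:ℝ) < (1 + t)⁻¹ := by positivity
  have hb : (0:ℝ) < (t / (1 + t)) * Real.exp B := by positivity
  rw [aux_int k hk _ _ ha hb]
  have hk0 : (0:ℝ) < (k:ℝ) := by exact_mod_cast hk
  have hab : (0:ℝ) < (1 + t)⁻¹ + (t / (1 + t)) * Real.exp B := by positivity
  field_simp
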